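/- Let G=(V,E) be an undirected graph and k a positive integer. An integral vector m: V → Z with m̃(V) = |E| is the in-degree vector of a k-edge-connected orientation of G if and only if m̃(X) ≥ i_G(X) + k for every X with ∅ ⊂ X ⊂ V. -/

import Mathlib

open Finset

/-- Head of edge `e` under orientation `o` (an orientation picks, for each edge,
one of its two end-nodes as head). -/
def ohead {V E : Type*} (ends : E → V × V) (o : E → Bool) (e : E) : V :=
  if o e then (ends e).1 else (ends e).2

/-- Tail of edge `e` under orientation `o`. -/
def otail {V E : Type*} (ends : E → V × V) (o : E → Bool) (e : E) : V :=
  if o e then (ends e).2 else (ends e).1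

/-- In-degree of node `v` in the orientation `o` of the graph. -/
def indeg {V E : Type*} [Fintype E] [DecidableEq V] (ends : E → V × V) (o : E → Bool)
    (v : V) : ℕ :=
  (Finset.univ.filter fun e => ohead ends o e = v).card

/-- `e_G(X)`: number of edges with at least one end-node in `X`. -/
def eG {V E : Type*} [Fintype E] [DecidableEq V] (ends : E → V × V) (X : Finset V) : ℕ :=
  (Finset.univ.filter fun e => (ends e).1 ∈ X ∨ (ends e).2 ∈ X).card

/-- `i_G(X)`: number of edges induced by `X` (both end-nodes in `X`). -/
def iG {V E : Type*} [Fintype E] [DecidableEq V] (ends : E → V × V) (X : Finset V) : ℕ :=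
  (Finset.univ.filter fun e => (ends e).1 ∈ X ∧ (ends e).2 ∈ X).card

/-- `ρ_D(X)`: number of arcs entering `X` (head in `X`, tail outside). -/
def inCut {V E : Type*} [Fintype E] [DecidableEq V] (ends : E → V × V) (o : E → Bool)
    (X : Finset V) : ℕ :=
  (Finset.univ.filter fun e => ohead ends o e ∈ X ∧ otail ends o e ∉ X).card

/-- `d_G(X)`: number of edges with exactly one end-node in `X`. -/
def dG {V E : Type*} [Fintype E] [DecidableEq V] (ends : E → V × V) (X : Finset V) : ℕ :=
  (Finset.univ.filter fun e =>
    ((ends e).1 ∈ X ∧ (ends e).2 ∉ X) ∨ ((ends e).2 ∈ X ∧ (ends e).1 ∉ X)).card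

/-- `Reach ends o s t`: there is a directed path from `s` to `t` in the orientation `o`. -/
def Reach {V E : Type*} (ends : E → V × V) (o : E → Bool) : V → V → Prop :=
  Relation.ReflTransGen fun u v => ∃ e, otail ends o e = u ∧ ohead ends o e = v

/-- `IsDipath ends o s t P`: the list of edges `P` forms a directed walk from `s` to `t`. -/
def IsDipath {V E : Type*} (ends : E → V × V) (o : E → Bool) : V → V → List E → Prop
  | s, t, [] => s = t
  | s, t, e :: P => otail ends o e = s ∧ IsDipath ends o (ohead ends o e) t P

/-- The components of `m` sorted in decreasing order. -/
def decSeq {V : Type*} [Fintype V] (m : V → ℕ) : List ℕ :=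
  (Multiset.sort (Finset.univ.val.map m) (· ≤ ·)).reverse

/-- The components of `m` sorted in increasing order. -/
def incSeq {V : Type*} [Fintype V] (m : V → ℕ) : List ℕ :=
  Multiset.sort (Finset.univ.val.map m) (· ≤ ·)

section aux
variable {V E : Type*} [Fintype V] [Fintype E] [DecidableEq V] (ends : E → V × V)

lemma sum_indeg_eq (o : E → Bool) (X : Finset V) :
    ∑ x ∈ X, indeg ends o x = (univ.filter fun e => ohead ends o e ∈ X).card := by
  rw [Finset.card_eq_sum_card_fiberwise (s := univ.filter fun e => ohead ends o e ∈ X) (f := fun e => ohead ends o e) (t := X)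
    (fun e he => (mem_filter.mp he).2)]
  apply Finset.sum_congr rfl
  intro x hx
  unfold indeg
  congr 1
  ext e
  simp only [mem_filter, mem_univ, true_and]
  aesop

lemma lemmaA (o : E → Bool) (X : Finset V) :
    ∑ x ∈ X, indeg ends o x = inCut ends o X + iG ends X := by
  rw [sum_indeg_eq]
  unfold inCut iG
  rw [← Finset.card_filter_add_card_filter_not
    (s := univ.filter fun e => ohead ends o e ∈ X) (p := fun e => otail ends o e ∉ X)]
  congr 1
  · congr 1; ext e; simp only [mem_filter, mem_univ, true_and]
  · congr 1; ext e
    simp only [mem_filter, mem_univ, true_and, not_not]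
    unfold ohead otail
    cases o e <;> simp [and_comm]

lemma sum_indeg_univ (o : E → Bool) : ∑ x, indeg ends o x = Fintype.card E := by
  rw [lemmaA]
  have h1 : inCut ends o univ = 0 := by
    unfold inCut
    simp
  have h2 : iG ends univ = Fintype.card E := by
    unfold iG
    have : (univ.filter fun e : E => (ends e).1 ∈ (univ : Finset V) ∧ (ends e).2 ∈ univ) = univ := by
      ext e; simp
    rw [this]; rfl
  rw [h1, h2]; ring

end aux

section paths
variable {V E : Type*} (ends : E → V × V) (o : E → Bool)

lemma isDipath_append : ∀ (P Q : List E) (s t : V),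
    IsDipath ends o s t (P ++ Q) ↔ ∃ w, IsDipath ends o s w P ∧ IsDipath ends o w t Q := by
  intro P
  induction P with
  | nil =>
    intro Q s t
    constructor
    · intro h; exact ⟨s, rfl, h⟩
    · rintro ⟨w, hw, h⟩
      have : s = w := hw
      rw [this]; exact h
  | cons e P ih =>
    intro Q s t
    show (otail ends o e = s ∧ IsDipath ends o (ohead ends o e) t (P ++ Q)) ↔ _
    rw [ih]
    constructor
    · rintro ⟨h1, w, h2, h3⟩; exact ⟨w, ⟨h1, h2⟩, h3⟩
    · rintro ⟨w, ⟨h1, h2⟩, h3⟩; exact ⟨h1, w, h2, h3⟩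

lemma reach_exists_dipath {s t : V} (h : Reach ends o s t) :
    ∃ P, IsDipath ends o s t P := by
  induction h with
  | refl => exact ⟨[], rfl⟩
  | tail _ hbc ih =>
    obtain ⟨P, hP⟩ := ih
    obtain ⟨e, he1, he2⟩ := hbc
    refine ⟨P ++ [e], ?_⟩
    rw [isDipath_append]
    exact ⟨_, hP, he1, he2⟩

lemma exists_dup_split {α : Type*} : ∀ (P : List α), ¬ P.Nodup →
    ∃ (A : List α) (e : α) (B C : List α), P = A ++ e :: B ++ e :: C := by
  intro P
  induction P with
  | nil => intro h; exact absurd List.nodup_nil h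
  | cons a P ih =>
    intro h
    rw [List.nodup_cons] at h
    by_cases ha : a ∈ P
    · obtain ⟨B, C, rfl⟩ := List.append_of_mem ha
      exact ⟨[], a, B, C, rfl⟩
    · have : ¬ P.Nodup := fun hn => h ⟨ha, hn⟩
      obtain ⟨A, e, B, C, rfl⟩ := ih this
      exact ⟨a :: A, e, B, C, rfl⟩

lemma exists_nodup_dipath : ∀ (n : ℕ) (P : List E) (s t : V), P.length ≤ n →
    IsDipath ends o s t P → ∃ Q : List E, Q.Nodup ∧ IsDipath ends o s t Q := by
  intro n
  induction n with
  | zero =>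
    intro P s t hl h
    rw [Nat.le_zero, List.length_eq_zero_iff] at hl
    exact ⟨[], by simp [hl ▸ h, List.nodup_nil], hl ▸ h⟩
  | succ n ih =>
    intro P s t hl h
    by_cases hnd : P.Nodup
    · exact ⟨P, hnd, h⟩
    · obtain ⟨A, e, B, C, rfl⟩ := exists_dup_split P hnd
      rw [isDipath_append] at h
      obtain ⟨w, hA, he, hrest⟩ := h
      rw [isDipath_append] at hA
      obtain ⟨w1, hA2, he1, _⟩ := hA
      apply ih (A ++ e :: C) s t
      · simp only [List.length_append, List.length_cons] at hl ⊢
        omega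
      · rw [isDipath_append]
        exact ⟨w1, hA2, he1, hrest⟩

variable [DecidableEq V]

lemma dipath_count (x : V) : ∀ (P : List E) (s t : V), IsDipath ends o s t P →
    (P.countP fun e => decide (otail ends o e = x)) + (if x = t then 1 else 0)
      = (P.countP fun e => decide (ohead ends o e = x)) + (if x = s then 1 else 0) := by
  intro P
  induction P with
  | nil =>
    intro s t h
    have : s = t := h
    simp [this]
  | cons e P ih =>
    intro s t h
    obtain ⟨hts, h2⟩ := h
    have IH := ih (ohead ends o e) t h2
    subst hts
    have a1 : (if (decide (otail ends o e = x)) = true then (1:ℕ) else 0)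
        = if x = otail ends o e then 1 else 0 := by simp [eq_comm]
    have a2 : (if (decide (ohead ends o e = x)) = true then (1:ℕ) else 0)
        = if x = ohead ends o e then 1 else 0 := by simp [eq_comm]
    simp only [List.countP_cons, a1, a2]
    omega
end paths

section flip
variable {V E : Type*} [Fintype V] [Fintype E] [DecidableEq V] [DecidableEq E] (ends : E → V × V)

lemma card_filter_mem_list (P : List E) (hP : P.Nodup) (p : E → Prop) [DecidablePred p] :
    (univ.filter fun e => e ∈ P ∧ p e).card = P.countP fun e => decide (p e) := by
  have h1 : (univ.filter fun e => e ∈ P ∧ p e) = (P.filter fun e => decide (p e)).toFinset := by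
    ext e; simp [List.mem_filter]
  rw [h1, List.toFinset_card_of_nodup (hP.filter _), ← List.countP_eq_length_filter]

lemma indeg_flip (o o' : E → Bool) {P : List E} (hP : P.Nodup)
    (ho' : ∀ e, o' e = if e ∈ P then !(o e) else o e) {s t : V}
    (h : IsDipath ends o s t P) (x : V) :
    indeg ends o' x + (if x = t then 1 else 0) = indeg ends o x + (if x = s then 1 else 0) := by
  have hsplit : ∀ (oo : E → Bool), indeg ends oo x =
      (univ.filter fun e => e ∈ P ∧ ohead ends oo e = x).card
        + (univ.filter fun e => ¬ (e ∈ P) ∧ ohead ends oo e = x).card := by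
    intro oo
    unfold indeg
    rw [← Finset.card_filter_add_card_filter_not
      (s := univ.filter fun e => ohead ends oo e = x) (p := fun e => e ∈ P)]
    congr 1 <;> · congr 1; ext e; simp only [mem_filter, mem_univ, true_and]; tauto
  have hin : ∀ e ∈ P, ohead ends o' e = otail ends o e := by
    intro e he
    unfold ohead otail
    rw [ho' e, if_pos he]
    cases o e <;> simp
  have hout : ∀ e, e ∉ P → ohead ends o' e = ohead ends o e := by
    intro e he
    unfold ohead
    rw [ho' e, if_neg he]
  have h1 : (univ.filter fun e => e ∈ P ∧ ohead ends o' e = x)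
      = univ.filter fun e => e ∈ P ∧ otail ends o e = x := by
    ext e; simp only [mem_filter, mem_univ, true_and]
    constructor
    · rintro ⟨he, hh⟩; exact ⟨he, by rw [← hin e he]; exact hh⟩
    · rintro ⟨he, hh⟩; exact ⟨he, by rw [hin e he]; exact hh⟩
  have h2 : (univ.filter fun e => ¬ (e ∈ P) ∧ ohead ends o' e = x)
      = univ.filter fun e => ¬ (e ∈ P) ∧ ohead ends o e = x := by
    ext e; simp only [mem_filter, mem_univ, true_and]
    constructor
    · rintro ⟨he, hh⟩; exact ⟨he, by rw [← hout e he]; exact hh⟩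
    · rintro ⟨he, hh⟩; exact ⟨he, by rw [hout e he]; exact hh⟩
  have key := dipath_count ends o x P s t h
  rw [hsplit o', hsplit o, h1, h2,
    card_filter_mem_list P hP (fun e => otail ends o e = x),
    card_filter_mem_list P hP (fun e => ohead ends o e = x)]
  omega
end flip

lemma iG_univ {V E : Type*} [Fintype V] [Fintype E] [DecidableEq V] (ends : E → V × V) :
    iG ends (univ : Finset V) = Fintype.card E := by
  unfold iG
  have : (univ.filter fun e : E => (ends e).1 ∈ (univ : Finset V) ∧ (ends e).2 ∈ univ) = univ := by
    ext e; simp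
  rw [this]; rfl

lemma exists_orientation {V E : Type*} [Fintype V] [Fintype E] [DecidableEq V]
    (ends : E → V × V) (m : V → ℤ)
    (hm : ∑ v, m v = (Fintype.card E : ℤ))
    (hcond : ∀ X : Finset V, X.Nonempty → X ≠ univ → (iG ends X : ℤ) ≤ ∑ v ∈ X, m v) :
    ∃ o : E → Bool, ∀ v, (indeg ends o v : ℤ) = m v := by
  classical
  suffices h : ∀ (n : ℕ) (o : E → Bool), (∑ v, ((indeg ends o v : ℤ) - m v).natAbs) ≤ n →
      ∃ o' : E → Bool, ∀ v, (indeg ends o' v : ℤ) = m v by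
    exact h _ (fun _ => true) le_rfl
  intro n
  induction n with
  | zero =>
    intro o h0
    refine ⟨o, fun v => ?_⟩
    have h1 := Finset.sum_eq_zero_iff.mp (Nat.le_zero.mp h0) v (mem_univ v)
    omega
  | succ n ih =>
    intro o hΦ
    by_cases h0 : ∀ v, (indeg ends o v : ℤ) = m v
    · exact ⟨o, h0⟩
    have hsumind : ∑ x, (indeg ends o x : ℤ) = (Fintype.card E : ℤ) := by
      rw [← Nat.cast_sum, sum_indeg_univ]
    have hg0 : ∑ x, ((indeg ends o x : ℤ) - m x) = 0 := by
      rw [Finset.sum_sub_distrib, hsumind, hm]; ring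
    have hv : ∃ v, m v < (indeg ends o v : ℤ) := by
      by_contra hc
      push_neg at hc
      apply h0
      intro x
      have h2 := (Finset.sum_eq_zero_iff_of_nonneg
        (fun y _ => by have := hc y; omega : ∀ y ∈ univ, (0:ℤ) ≤ m y - (indeg ends o y : ℤ))).mp
        (by rw [Finset.sum_sub_distrib, hsumind, hm]; ring) x (mem_univ x)
      omega
    obtain ⟨v, hvlt⟩ := hv
    set X : Finset V := univ.filter (fun x => Reach ends o x v) with hX
    have hvX : v ∈ X := by
      simp only [hX, mem_filter, mem_univ, true_and]
      exact Relation.ReflTransGen.refl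
    have hcut : inCut ends o X = 0 := by
      unfold inCut
      rw [Finset.card_eq_zero, Finset.filter_eq_empty_iff]
      rintro e - ⟨hh, ht⟩
      apply ht
      simp only [hX, mem_filter, mem_univ, true_and] at hh ⊢
      exact Relation.ReflTransGen.head ⟨e, rfl, rfl⟩ hh
    have hiX : (iG ends X : ℤ) ≤ ∑ x ∈ X, m x := by
      by_cases hXu : X = univ
      · rw [hXu, hm, iG_univ]
      · exact hcond X ⟨v, hvX⟩ hXu
    have hsum : ∑ x ∈ X, (indeg ends o x : ℤ) = (iG ends X : ℤ) := by
      have hN : ∑ x ∈ X, indeg ends o x = iG ends X := by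
        rw [lemmaA ends o X, hcut]; omega
      rw [← Nat.cast_sum, hN]
    have hu : ∃ u ∈ X, (indeg ends o u : ℤ) < m u := by
      by_contra hc
      push_neg at hc
      have hpos : 0 < ∑ x ∈ X, ((indeg ends o x : ℤ) - m x) :=
        Finset.sum_pos' (fun x hx => by have := hc x hx; omega) ⟨v, hvX, by omega⟩
      rw [Finset.sum_sub_distrib, hsum] at hpos
      omega
    obtain ⟨u, huX, hult⟩ := hu
    have hreach : Reach ends o u v := by
      simpa only [hX, mem_filter, mem_univ, true_and] using huX
    obtain ⟨P0, hP0⟩ := reach_exists_dipath ends o hreach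
    obtain ⟨P, hPnd, hP⟩ := exists_nodup_dipath ends o P0.length P0 u v le_rfl hP0
    set o' : E → Bool := fun e => if e ∈ P then !(o e) else o e with ho'
    have hflip : ∀ x, indeg ends o' x + (if x = v then 1 else 0)
        = indeg ends o x + (if x = u then 1 else 0) :=
      fun x => indeg_flip ends o o' hPnd (fun e => by rw [ho']) hP x
    have huv : u ≠ v := fun h => by rw [h] at hult; omega
    apply ih o'
    have hΦlt : ∑ x, ((indeg ends o' x : ℤ) - m x).natAbs
        < ∑ x, ((indeg ends o x : ℤ) - m x).natAbs := by
      apply Finset.sum_lt_sum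
      · intro x _
        have hfx := hflip x
        split_ifs at hfx with h1 h2 h2
        · exact absurd (h2.symm.trans h1) huv
        · rw [h1] at hfx ⊢; omega
        · rw [h2] at hfx ⊢; omega
        · omega
      · refine ⟨v, mem_univ v, ?_⟩
        have hfv := hflip v
        rw [if_pos rfl, if_neg (fun h : v = u => huv h.symm)] at hfv
        omega
    omega

/-- An integral vector `m` with `m̃(V) = |E|` is the in-degree vector of
a `k`-edge-connected orientation of `G` iff `m̃(X) ≥ i_G(X) + k` for every `∅ ⊂ X ⊂ V`. -/
theorem kEdgeConnected_orientation_iff {V E : Type*} [Fintype V] [Fintype E] [DecidableEq V]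
    (ends : E → V × V) (hloop : ∀ e, (ends e).1 ≠ (ends e).2)
    (k : ℕ) (hk : 0 < k)
    (m : V → ℤ) (hm : ∑ v, m v = (Fintype.card E : ℤ)) :
    (∃ o : E → Bool, (∀ v, (indeg ends o v : ℤ) = m v) ∧
        ∀ X : Finset V, X.Nonempty → X ≠ Finset.univ → k ≤ inCut ends o X) ↔
      ∀ X : Finset V, X.Nonempty → X ≠ Finset.univ →
        (iG ends X : ℤ) + (k : ℤ) ≤ ∑ v ∈ X, m v := by
  constructor
  · rintro ⟨o, hdeg, hconn⟩ X hX1 hX2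
    have hA := lemmaA ends o X
    have hc := hconn X hX1 hX2
    have hsm : ∑ x ∈ X, m x = ∑ x ∈ X, (indeg ends o x : ℤ) :=
      Finset.sum_congr rfl fun x _ => (hdeg x).symm
    rw [hsm, ← Nat.cast_sum, hA]
    push_cast
    omega
  · intro h
    have hk' : (0:ℤ) < (k:ℤ) := by exact_mod_cast hk
    obtain ⟨o, ho⟩ := exists_orientation ends m hm
      (fun X h1 h2 => by have := h X h1 h2; omega)
    refine ⟨o, ho, fun X h1 h2 => ?_⟩
    have hA := lemmaA ends o X
    have hs : ∑ x ∈ X, (indeg ends o x : ℤ) = ∑ x ∈ X, m x :=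
      Finset.sum_congr rfl fun x _ => ho x
    have hX := h X h1 h2
    rw [← Nat.cast_sum, hA] at hs
    push_cast at hs
    omega
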